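/- For every Q ∈ S ⊗ R the following are equivalent: (i) β(Q, Q) = 0; (ii) there exists an ω-isotropic subspace U ⊆ R such that Q lies in S ⊗ U; (iii) the range of the linear map q_Q : Dual(S) → R determined by Q via contraction (q_Q(α) = (α ⊗ id)(Q)) is an ω-isotropic subspace of R. (This is the basic characterization of square-zero supercharges underlying the classification of twists in §3.1.1 of the paper.) -/

import Mathlib

open TensorProduct ExteriorAlgebra

/-- The wedge `s ∧ t` as an element of the second exterior power `⋀[ℂ]^2 S`. -/
noncomputable def wedge {S : Type} [AddCommGroup S] [Module ℂ S] (s t : S) : ⋀[ℂ]^2 S :=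
  ⟨ι ℂ s * ι ℂ t, by
    show _ ∈ LinearMap.range (ι ℂ : S →ₗ[ℂ] ExteriorAlgebra ℂ S) ^ 2
    rw [pow_two]
    exact Submodule.mul_mem_mul (LinearMap.mem_range_self _ s) (LinearMap.mem_range_self _ t)⟩

namespace SquareZeroAux

variable {S R : Type} [AddCommGroup S] [Module ℂ S] [AddCommGroup R] [Module ℂ R]

/-- Contraction of a tensor with a dual vector in the first slot. -/
noncomputable def contra (α : Module.Dual ℂ S) : S ⊗[ℂ] R →ₗ[ℂ] R :=
  (TensorProduct.lid ℂ R).toLinearMap ∘ₗ TensorProduct.map α LinearMap.id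

@[simp] lemma contra_tmul (α : Module.Dual ℂ S) (s : S) (r : R) :
    contra α (s ⊗ₜ[ℂ] r) = α s • r := by
  simp [contra]

lemma contra_eq (α : Module.Dual ℂ S) (Q : S ⊗[ℂ] R) :
    TensorProduct.lid ℂ R (TensorProduct.map α (LinearMap.id : R →ₗ[ℂ] R) Q) = contra α Q := rfl

lemma contra_add_dual (α α' : Module.Dual ℂ S) (Q : S ⊗[ℂ] R) :
    contra (α + α') Q = contra α Q + contra α' Q := by
  simp [contra, TensorProduct.map_add_left]

lemma contra_smul_dual (c : ℂ) (α : Module.Dual ℂ S) (Q : S ⊗[ℂ] R) :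
    contra (c • α) Q = c • contra α Q := by
  simp [contra, TensorProduct.map_smul_left]

/-- Contraction as a linear map in the dual variable. -/
noncomputable def contraMap (Q : S ⊗[ℂ] R) : Module.Dual ℂ S →ₗ[ℂ] R where
  toFun := fun α => contra α Q
  map_add' := fun α α' => contra_add_dual α α' Q
  map_smul' := fun c α => contra_smul_dual c α Q

lemma repr_eq {ι : Type*} [Fintype ι] (b : Module.Basis ι ℂ S) (Q : S ⊗[ℂ] R) :
    Q = ∑ i, b i ⊗ₜ[ℂ] contra (b.coord i) Q := by
  induction Q using TensorProduct.induction_on with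
  | zero => simp
  | tmul s r =>
      simp only [contra_tmul]
      conv_lhs => rw [← b.sum_repr s]
      rw [TensorProduct.sum_tmul]
      refine Finset.sum_congr rfl fun i _ => ?_
      rw [Module.Basis.coord_apply, TensorProduct.smul_tmul]
  | add x y hx hy =>
      calc x + y = (∑ i, b i ⊗ₜ[ℂ] contra (b.coord i) x)
            + (∑ i, b i ⊗ₜ[ℂ] contra (b.coord i) y) := by rw [← hx, ← hy]
        _ = ∑ i, (b i ⊗ₜ[ℂ] contra (b.coord i) x + b i ⊗ₜ[ℂ] contra (b.coord i) y) :=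
            Finset.sum_add_distrib.symm
        _ = ∑ i, b i ⊗ₜ[ℂ] contra (b.coord i) (x + y) := by
            simp [TensorProduct.tmul_add]

/-- The alternating bilinear functional `(s, t) ↦ α s * α' t - α' s * α t`. -/
noncomputable def bilinFunc (α α' : Module.Dual ℂ S) : S [⋀^Fin 2]→ₗ[ℂ] ℂ where
  toMultilinearMap := (MultilinearMap.mkPiAlgebraFin ℂ 2 ℂ).compLinearMap ![α, α'] -
      (MultilinearMap.mkPiAlgebraFin ℂ 2 ℂ).compLinearMap ![α', α]
  map_eq_zero_of_eq' := by
    intro v i j hv hij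
    show ((MultilinearMap.mkPiAlgebraFin ℂ 2 ℂ).compLinearMap ![α, α'] -
      (MultilinearMap.mkPiAlgebraFin ℂ 2 ℂ).compLinearMap ![α', α]) v = 0
    have h01 : v 0 = v 1 := by
      fin_cases i <;> fin_cases j <;>
        first
          | exact absurd rfl hij
          | exact hv
          | exact hv.symm
    simp only [MultilinearMap.sub_apply, MultilinearMap.compLinearMap_apply,
      MultilinearMap.mkPiAlgebraFin_apply, List.ofFn_succ, List.ofFn_zero, List.prod_cons,
      List.prod_nil, Matrix.cons_val_zero, Matrix.cons_val_one, Matrix.head_cons,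
      Fin.succ_zero_eq_one, h01]
    ring

/-- The induced linear functional on the second exterior power. -/
noncomputable def wedgeFunc (α α' : Module.Dual ℂ S) : (⋀[ℂ]^2 S) →ₗ[ℂ] ℂ :=
  (ExteriorAlgebra.liftAlternating (fun i => match i with
     | 2 => bilinFunc α α'
     | _ => 0)) ∘ₗ (Submodule.subtype _)

lemma wedgeFunc_wedge (α α' : Module.Dual ℂ S) (s t : S) :
    wedgeFunc α α' (wedge s t) = α s * α' t - α' s * α t := by
  have h1 : ((wedge s t : ⋀[ℂ]^2 S) : ExteriorAlgebra ℂ S) = ιMulti ℂ 2 ![s, t] := by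
    simp [wedge, ιMulti_apply, List.ofFn_succ]
  show ExteriorAlgebra.liftAlternating _ ((wedge s t : ⋀[ℂ]^2 S) : ExteriorAlgebra ℂ S) = _
  rw [h1, liftAlternating_apply_ιMulti]
  show (bilinFunc α α') ![s, t] = _
  simp only [bilinFunc, AlternatingMap.coe_mk, MultilinearMap.sub_apply,
    MultilinearMap.compLinearMap_apply, MultilinearMap.mkPiAlgebraFin_apply,
    List.ofFn_succ, List.ofFn_zero, List.prod_cons, List.prod_nil,
    Matrix.cons_val_zero, Matrix.cons_val_one, Matrix.head_cons, Fin.succ_zero_eq_one]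
  ring

end SquareZeroAux

open SquareZeroAux in
/-- For `Q ∈ S ⊗ R` the following are equivalent: (i) `β Q Q = 0`; (ii) `Q` lies in `S ⊗ U`
for some `ω`-isotropic subspace `U ⊆ R`; (iii) the range of the contraction map
`q_Q : Dual S → R`, `α ↦ (α ⊗ id) Q`, is an `ω`-isotropic subspace of `R`. -/
theorem square_zero_supercharge_characterization
    {S R : Type} [AddCommGroup S] [Module ℂ S] [FiniteDimensional ℂ S]
    [AddCommGroup R] [Module ℂ R] [FiniteDimensional ℂ R]
    (ω : R →ₗ[ℂ] R →ₗ[ℂ] ℂ)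
    (halt : ∀ r : R, ω r r = 0)
    (hnd : ∀ r : R, (∀ r' : R, ω r r' = 0) → r = 0)
    (β : (S ⊗[ℂ] R) →ₗ[ℂ] (S ⊗[ℂ] R) →ₗ[ℂ] ⋀[ℂ]^2 S)
    (hβ : ∀ (s s' : S) (r r' : R),
      β (s ⊗ₜ[ℂ] r) (s' ⊗ₜ[ℂ] r') = ω r r' • wedge s s')
    (Q : S ⊗[ℂ] R) :
    (β Q Q = 0 ↔
      ∃ U : Submodule ℂ R, (∀ u ∈ U, ∀ u' ∈ U, ω u u' = 0) ∧
        Q ∈ LinearMap.range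
          (TensorProduct.map (LinearMap.id : S →ₗ[ℂ] S) U.subtype)) ∧
    (β Q Q = 0 ↔
      ∀ α α' : Module.Dual ℂ S,
        ω (TensorProduct.lid ℂ R (TensorProduct.map α (LinearMap.id : R →ₗ[ℂ] R) Q))
          (TensorProduct.lid ℂ R (TensorProduct.map α' (LinearMap.id : R →ₗ[ℂ] R) Q)) = 0) := by
  classical
  have hanti : ∀ a c : R, ω a c = - ω c a := by
    intro a c
    have h := halt (a + c)
    simp only [map_add, LinearMap.add_apply, halt a, halt c, zero_add, add_zero] at h
    linear_combination h
  set b := Module.finBasis ℂ S with hb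
  set n := Module.finrank ℂ S with hn
  set r : Fin n → R := fun i => contra (b.coord i) Q with hr
  have hrep : Q = ∑ i, b i ⊗ₜ[ℂ] r i := repr_eq b Q
  have hββ : β Q Q = ∑ i, ∑ j, ω (r i) (r j) • wedge (b i) (b j) := by
    conv_lhs => rw [hrep]
    rw [map_sum β (fun i => b i ⊗ₜ[ℂ] r i) Finset.univ, LinearMap.sum_apply]
    refine Finset.sum_congr rfl fun i _ => ?_
    rw [map_sum (β (b i ⊗ₜ[ℂ] r i)) (fun j => b j ⊗ₜ[ℂ] r j) Finset.univ]
    exact Finset.sum_congr rfl fun j _ => hβ _ _ _ _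
  have hq : ∀ γ : Module.Dual ℂ S, contra γ Q = ∑ i, γ (b i) • r i := by
    intro γ
    conv_lhs => rw [hrep]
    rw [map_sum]
    exact Finset.sum_congr rfl fun i _ => contra_tmul γ (b i) (r i)
  -- (iii) → (i)
  have iii_to_i : (∀ α α' : Module.Dual ℂ S, ω (contra α Q) (contra α' Q) = 0) →
      β Q Q = 0 := by
    intro h
    have hz : ∀ i j, ω (r i) (r j) = 0 := fun i j => h (b.coord i) (b.coord j)
    rw [hββ]
    simp [hz]
  -- (i) → (iii)
  have i_to_iii : β Q Q = 0 →
      ∀ α α' : Module.Dual ℂ S, ω (contra α Q) (contra α' Q) = 0 := by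
    intro h α α'
    set T : ℂ := ∑ i, ∑ j, α (b i) * α' (b j) * ω (r i) (r j) with hT
    have hTarget : ω (contra α Q) (contra α' Q) = T := by
      rw [hq α, hq α', hT]
      rw [map_sum ω (fun i => α (b i) • r i) Finset.univ, LinearMap.sum_apply]
      refine Finset.sum_congr rfl fun i _ => ?_
      rw [map_sum (ω (α (b i) • r i)) (fun j => α' (b j) • r j) Finset.univ]
      refine Finset.sum_congr rfl fun j _ => ?_
      simp only [map_smul, LinearMap.smul_apply, smul_eq_mul]
      ring
    have hLβ : wedgeFunc α α' (β Q Q)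
        = ∑ i, ∑ j, ω (r i) (r j) * (α (b i) * α' (b j) - α' (b i) * α (b j)) := by
      rw [hββ, map_sum]
      refine Finset.sum_congr rfl fun i _ => ?_
      rw [map_sum]
      refine Finset.sum_congr rfl fun j _ => ?_
      rw [map_smul, wedgeFunc_wedge, smul_eq_mul]
    have h0 : ∑ i, ∑ j, ω (r i) (r j) * (α (b i) * α' (b j) - α' (b i) * α (b j)) = 0 := by
      rw [← hLβ, h, map_zero]
    have e1 : ∑ i, ∑ j, ω (r i) (r j) * (α (b i) * α' (b j))
        - ∑ i, ∑ j, ω (r i) (r j) * (α' (b i) * α (b j)) = 0 := by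
      rw [← Finset.sum_sub_distrib]
      simp_rw [← Finset.sum_sub_distrib, ← mul_sub]
      exact h0
    have e2 : ∑ i, ∑ j, ω (r i) (r j) * (α (b i) * α' (b j)) = T := by
      refine Finset.sum_congr rfl fun i _ => Finset.sum_congr rfl fun j _ => ?_
      ring
    have e3 : ∑ i, ∑ j, ω (r i) (r j) * (α' (b i) * α (b j)) = -T := by
      have step : ∀ i j, ω (r i) (r j) * (α' (b i) * α (b j))
          = -(α (b j) * α' (b i) * ω (r j) (r i)) := by
        intro i j
        rw [hanti (r i) (r j)]
        ring
      calc ∑ i, ∑ j, ω (r i) (r j) * (α' (b i) * α (b j))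
          = ∑ i, ∑ j, -(α (b j) * α' (b i) * ω (r j) (r i)) :=
            Finset.sum_congr rfl fun i _ => Finset.sum_congr rfl fun j _ => step i j
        _ = -∑ i, ∑ j, α (b j) * α' (b i) * ω (r j) (r i) := by
            simp only [Finset.sum_neg_distrib]
        _ = -∑ j, ∑ i, α (b i) * α' (b j) * ω (r i) (r j) := rfl
        _ = -T := by
            rw [hT]
            exact congrArg Neg.neg Finset.sum_comm
    have h2T : (2 : ℂ) * T = 0 := by
      have := e1
      rw [e2, e3] at this
      linear_combination this
    have hT0 : T = 0 := by
      have := mul_eq_zero.mp h2T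
      rcases this with h' | h'
      · exact absurd h' (by norm_num)
      · exact h'
    rw [hTarget, hT0]
  -- (iii) → (ii)
  have iii_to_ii : (∀ α α' : Module.Dual ℂ S, ω (contra α Q) (contra α' Q) = 0) →
      ∃ U : Submodule ℂ R, (∀ u ∈ U, ∀ u' ∈ U, ω u u' = 0) ∧
        Q ∈ LinearMap.range
          (TensorProduct.map (LinearMap.id : S →ₗ[ℂ] S) U.subtype) := by
    intro h
    refine ⟨LinearMap.range (contraMap Q), ?_, ?_⟩
    · rintro u ⟨α, rfl⟩ u' ⟨α', rfl⟩
      exact h α α'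
    · have hmem : ∀ i, r i ∈ LinearMap.range (contraMap Q) := fun i => ⟨b.coord i, rfl⟩
      refine ⟨∑ i, b i ⊗ₜ[ℂ] (⟨r i, hmem i⟩ : LinearMap.range (contraMap Q)), ?_⟩
      rw [map_sum]
      conv_rhs => rw [hrep]
      exact Finset.sum_congr rfl fun i _ => by rw [TensorProduct.map_tmul]; rfl
  -- (ii) → (iii)
  have ii_to_iii : (∃ U : Submodule ℂ R, (∀ u ∈ U, ∀ u' ∈ U, ω u u' = 0) ∧
        Q ∈ LinearMap.range
          (TensorProduct.map (LinearMap.id : S →ₗ[ℂ] S) U.subtype)) →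
      ∀ α α' : Module.Dual ℂ S, ω (contra α Q) (contra α' Q) = 0 := by
    rintro ⟨U, hU, Q', hQ'⟩ α α'
    have hmem : ∀ (x : S ⊗[ℂ] U) (γ : Module.Dual ℂ S),
        contra γ (TensorProduct.map (LinearMap.id : S →ₗ[ℂ] S) U.subtype x) ∈ U := by
      intro x γ
      induction x using TensorProduct.induction_on with
      | zero =>
          simp only [map_zero]
          exact U.zero_mem
      | tmul s u =>
          rw [TensorProduct.map_tmul, contra_tmul]
          exact U.smul_mem _ u.2
      | add x y hx hy =>
          rw [map_add, map_add]
          exact U.add_mem hx hy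
    rw [← hQ']
    exact hU _ (hmem Q' α) _ (hmem Q' α')
  exact ⟨⟨fun h => iii_to_ii (i_to_iii h), fun h => iii_to_i (ii_to_iii h)⟩,
    ⟨fun h α α' => i_to_iii h α α', fun h => iii_to_i fun α α' => h α α'⟩⟩
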